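/- Let ρ : ℤ/p → GL_n(ℤ) be any group homomorphism (p prime). Then the induced action of ℤ/p on ℤ^n ∖ {0} is free (i.e., ρ(g)v = v with g ≠ 1 implies v = 0) if and only if the fixed-point set of the induced ℤ/p-action on the torus T^n = ℝ^n/ℤ^n is finite. -/

import Mathlib

/-- The standard lattice `ℤⁿ ⊆ ℝⁿ` as an additive subgroup. -/
noncomputable def intLattice (n : ℕ) : AddSubgroup (Fin n → ℝ) :=
  ((Int.castAddHom ℝ).compLeft (Fin n)).range

/-- The torus `Tⁿ = ℝⁿ/ℤⁿ`. -/
noncomputable abbrev Torus (n : ℕ) : Type := (Fin n → ℝ) ⧸ intLattice n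

/-- The fixed-point set of the `ℤ/p`-action on `Tⁿ = ℝⁿ/ℤⁿ` induced by `ρ`: a point `x` of the
torus is fixed iff for every `g` and every lift `y` of `x`, the class of `ρ(g)y` is again `x`. -/
def torusFixedPoints (p n : ℕ)
    (ρ : Multiplicative (ZMod p) →* Matrix.GeneralLinearGroup (Fin n) ℤ) :
    Set (Torus n) :=
  {x | ∀ g : Multiplicative (ZMod p), ∀ y : Fin n → ℝ,
    (QuotientAddGroup.mk y : Torus n) = x →
      (QuotientAddGroup.mk (((ρ g : Matrix (Fin n) (Fin n) ℤ).map
        (Int.cast : ℤ → ℝ)).mulVec y) : Torus n) = x}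

open Matrix

lemma mem_intLattice {n : ℕ} (z : Fin n → ℝ) :
    z ∈ intLattice n ↔ ∃ c : Fin n → ℤ, (fun i => (c i : ℝ)) = z := by
  constructor
  · rintro ⟨c, rfl⟩; exact ⟨c, rfl⟩
  · rintro ⟨c, rfl⟩; exact ⟨c, rfl⟩

lemma cast_mulVec {n : ℕ} (M : Matrix (Fin n) (Fin n) ℤ) (c : Fin n → ℤ) :
    (M.map (Int.cast : ℤ → ℝ)) *ᵥ (fun i => (c i : ℝ)) = fun i => ((M *ᵥ c) i : ℝ) := by
  funext i
  have := RingHom.map_mulVec (Int.castRingHom ℝ) M c i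
  simpa [Function.comp_def] using this.symm

lemma pow_mulVec_fix {n : ℕ} (A : Matrix (Fin n) (Fin n) ℤ) (v : Fin n → ℤ)
    (h : A *ᵥ v = v) (m : ℕ) : (A ^ m) *ᵥ v = v := by
  induction m with
  | zero => simp
  | succ k ih => rw [pow_succ, ← mulVec_mulVec, h, ih]

lemma all_fix {p n : ℕ} (hp : p.Prime)
    (ρ : Multiplicative (ZMod p) →* Matrix.GeneralLinearGroup (Fin n) ℤ)
    (g : Multiplicative (ZMod p)) (hg : g ≠ 1) (v : Fin n → ℤ)
    (h : (ρ g : Matrix (Fin n) (Fin n) ℤ) *ᵥ v = v)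
    (g' : Multiplicative (ZMod p)) :
    (ρ g' : Matrix (Fin n) (Fin n) ℤ) *ᵥ v = v := by
  haveI : Fact p.Prime := ⟨hp⟩
  have ha : (Multiplicative.toAdd g) ≠ 0 := by
    simpa using hg
  set a := Multiplicative.toAdd g with hadef
  set b := Multiplicative.toAdd g'
  set m : ℕ := (b * a⁻¹).val with hm
  have hgm : g ^ m = g' := by
    apply Multiplicative.toAdd.injective
    rw [toAdd_pow]
    show m • a = b
    rw [nsmul_eq_mul, hm, ZMod.natCast_val, ZMod.cast_id]
    field_simp
  rw [← hgm, map_pow]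
  have : ((ρ g ^ m : Matrix.GeneralLinearGroup (Fin n) ℤ) : Matrix (Fin n) (Fin n) ℤ)
      = (ρ g : Matrix (Fin n) (Fin n) ℤ) ^ m := Units.val_pow_eq_pow_val _ _
  rw [this]
  exact pow_mulVec_fix _ _ h m

lemma fixed_infinite {p n : ℕ} (hp : p.Prime)
    (ρ : Multiplicative (ZMod p) →* Matrix.GeneralLinearGroup (Fin n) ℤ)
    (g : Multiplicative (ZMod p)) (hg : g ≠ 1) (v : Fin n → ℤ) (hv : v ≠ 0)
    (h : (ρ g : Matrix (Fin n) (Fin n) ℤ) *ᵥ v = v) :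
    (torusFixedPoints p n ρ).Infinite := by
  obtain ⟨i₀, hi₀⟩ : ∃ i, v i ≠ 0 := by
    by_contra hc; push_neg at hc; exact hv (funext fun i => hc i)
  set vR : Fin n → ℝ := fun i => (v i : ℝ) with hvR
  set f : ℕ → Torus n :=
    fun m => QuotientAddGroup.mk (((m : ℝ) * Real.sqrt 2) • vR) with hf
  apply Set.infinite_of_injective_forall_mem (f := f)
  · -- injective
    intro m m' hmm'
    by_contra hne
    rw [hf] at hmm'
    have hmem := (QuotientAddGroup.eq_iff_sub_mem).1 hmm'.symm
    obtain ⟨c, hc⟩ := (mem_intLattice _).1 hmem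
    have hci := congrFun hc i₀
    simp only [Pi.sub_apply, Pi.smul_apply, smul_eq_mul] at hci
    simp only [hvR] at hci
    have hd : ((m' : ℝ) - m) * Real.sqrt 2 * (v i₀ : ℝ) = (c i₀ : ℝ) := by
      rw [hci]; ring
    have hden : (((m' : ℚ) - m) * (v i₀ : ℚ)) ≠ 0 := by
      apply mul_ne_zero
      · rw [sub_ne_zero]
        exact_mod_cast fun hh => hne (by exact_mod_cast hh.symm)
      · exact_mod_cast hi₀
    have hdenR : (((m' : ℝ) - m) * (v i₀ : ℝ)) ≠ 0 := by exact_mod_cast hden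
    have hsq : ((((c i₀ : ℚ) / (((m' : ℚ) - m) * (v i₀ : ℚ))) : ℚ) : ℝ) = Real.sqrt 2 := by
      push_cast
      rw [div_eq_iff hdenR, ← hd]
      ring
    exact irrational_sqrt_two ⟨_, hsq⟩
  · -- membership
    intro m
    intro g' y hy
    rw [hf] at hy ⊢
    set t : ℝ := (m : ℝ) * Real.sqrt 2
    have hmem := (QuotientAddGroup.eq_iff_sub_mem).1 hy
    obtain ⟨c, hc⟩ := (mem_intLattice _).1 hmem
    have hyeq : y = t • vR + fun i => (c i : ℝ) := by
      rw [hc]; abel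
    have hfixg' : (ρ g' : Matrix (Fin n) (Fin n) ℤ) *ᵥ v = v :=
      all_fix hp ρ g hg v h g'
    have hcast : ((ρ g' : Matrix (Fin n) (Fin n) ℤ).map (Int.cast : ℤ → ℝ)) *ᵥ vR = vR := by
      rw [hvR, cast_mulVec, hfixg']
    rw [QuotientAddGroup.eq_iff_sub_mem]
    apply (mem_intLattice _).2
    refine ⟨(ρ g' : Matrix (Fin n) (Fin n) ℤ) *ᵥ c, ?_⟩
    rw [hyeq, mulVec_add, mulVec_smul, hcast, cast_mulVec]
    abel

lemma fixed_finite {p n : ℕ} (hp : p.Prime)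
    (ρ : Multiplicative (ZMod p) →* Matrix.GeneralLinearGroup (Fin n) ℤ)
    (hfree : ∀ g : Multiplicative (ZMod p), g ≠ 1 → ∀ v : Fin n → ℤ,
        (ρ g : Matrix (Fin n) (Fin n) ℤ) *ᵥ v = v → v = 0) :
    (torusFixedPoints p n ρ).Finite := by
  haveI : Fact p.Prime := ⟨hp⟩
  set g₀ : Multiplicative (ZMod p) := Multiplicative.ofAdd 1 with hg₀def
  have hg₀ : g₀ ≠ 1 := by
    simp only [hg₀def, ne_eq, ← ofAdd_zero, Multiplicative.ofAdd.injective.eq_iff]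
    exact one_ne_zero
  set A : Matrix (Fin n) (Fin n) ℤ := (ρ g₀ : Matrix (Fin n) (Fin n) ℤ) with hA
  set M : Matrix (Fin n) (Fin n) ℤ := A - 1 with hM
  have hMinj : ∀ v : Fin n → ℤ, M *ᵥ v = 0 → v = 0 := by
    intro v hv
    rw [hM, sub_mulVec, one_mulVec, sub_eq_zero] at hv
    exact hfree g₀ hg₀ v hv
  have hdet : M.det ≠ 0 := by
    intro h0
    obtain ⟨v, hv0, hv⟩ := Matrix.exists_mulVec_eq_zero_iff.2 h0
    exact hv0 (hMinj v hv)
  set k : ℤ := M.det with hk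
  set m : ℕ := k.natAbs with hmdef
  haveI : NeZero m := ⟨Int.natAbs_ne_zero.2 hdet⟩
  have hkR : (k : ℝ) ≠ 0 := Int.cast_ne_zero.2 hdet
  set ψ : (Fin n → ZMod m) → Torus n := fun a =>
    QuotientAddGroup.mk ((k : ℝ)⁻¹ • fun i => (((a i).val : ℤ) : ℝ)) with hψ
  apply Set.Finite.subset (Set.finite_range ψ)
  intro x hx
  obtain ⟨y, rfl⟩ := QuotientAddGroup.mk_surjective x
  have h1 := hx g₀ y rfl
  have hmem := (QuotientAddGroup.eq_iff_sub_mem).1 h1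
  obtain ⟨c, hc⟩ := (mem_intLattice _).1 hmem
  have hmapsub : M.map (Int.cast : ℤ → ℝ) = A.map (Int.cast : ℤ → ℝ) - 1 := by
    have h := map_sub (Int.castRingHom ℝ).mapMatrix A 1
    simpa [RingHom.mapMatrix_apply] using h
  have hMR : (M.map (Int.cast : ℤ → ℝ)) *ᵥ y = fun i => (c i : ℝ) := by
    rw [hmapsub, sub_mulVec, one_mulVec, ← hc]
  have hadj : M.adjugate.map (Int.cast : ℤ → ℝ) = (M.map (Int.cast : ℤ → ℝ)).adjugate := by
    have h := RingHom.map_adjugate (Int.castRingHom ℝ) M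
    simpa [RingHom.mapMatrix_apply, Int.coe_castRingHom] using h
  have hdetR : (M.map (Int.cast : ℤ → ℝ)).det = (k : ℝ) := by
    have h := RingHom.map_det (Int.castRingHom ℝ) M
    simpa [RingHom.mapMatrix_apply, Int.coe_castRingHom] using h.symm
  set d : Fin n → ℤ := M.adjugate *ᵥ c with hd
  have h2 : (k : ℝ) • y = fun i => (d i : ℝ) := by
    have h3 : (M.adjugate.map (Int.cast : ℤ → ℝ)) *ᵥ ((M.map (Int.cast : ℤ → ℝ)) *ᵥ y)
        = (k : ℝ) • y := by
      rw [hadj, mulVec_mulVec, Matrix.adjugate_mul, hdetR, smul_mulVec, one_mulVec]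
    rw [← h3, hMR, hd, cast_mulVec]
  set e : Fin n → ℤ := fun i => ((d i : ZMod m)).val with he
  have hdvd : ∀ i, k ∣ d i - e i := by
    intro i
    rw [← Int.natAbs_dvd, ← hmdef, ← ZMod.intCast_zmod_eq_zero_iff_dvd]
    push_cast [he]
    rw [ZMod.natCast_val, ZMod.cast_id, sub_self]
  choose w hw using fun i => (hdvd i)
  refine ⟨fun i => (d i : ZMod m), ?_⟩
  rw [hψ]
  rw [QuotientAddGroup.eq_iff_sub_mem]
  apply (mem_intLattice _).2
  refine ⟨fun i => -(w i), ?_⟩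
  have hy : y = (k : ℝ)⁻¹ • fun i => (d i : ℝ) := by
    rw [← h2, inv_smul_smul₀ hkR]
  funext i
  have hwi : (d i : ℝ) - (e i : ℝ) = (k : ℝ) * (w i : ℝ) := by
    exact_mod_cast congrArg (Int.cast : ℤ → ℝ) (hw i)
  simp only [Pi.sub_apply, Pi.smul_apply, smul_eq_mul, he]
  rw [hy]
  simp only [Pi.smul_apply, smul_eq_mul]
  push_cast
  have : (((d i : ZMod m)).val : ℝ) = (e i : ℝ) := by rw [he]; push_cast; ring
  rw [this]
  field_simp
  linarith [hwi]

/-- For any homomorphism `ρ : ℤ/p → GL_n(ℤ)` (`p` prime), the induced action of `ℤ/p` on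
`ℤⁿ ∖ {0}` is free if and only if the fixed-point set of the induced `ℤ/p`-action on the torus
`Tⁿ = ℝⁿ/ℤⁿ` is finite. -/
theorem free_iff_torus_fixed_points_finite (p n : ℕ) (hp : p.Prime) (hn : 0 < n)
    (ρ : Multiplicative (ZMod p) →* Matrix.GeneralLinearGroup (Fin n) ℤ) :
    (∀ g : Multiplicative (ZMod p), g ≠ 1 → ∀ v : Fin n → ℤ,
        (ρ g : Matrix (Fin n) (Fin n) ℤ).mulVec v = v → v = 0) ↔
      (torusFixedPoints p n ρ).Finite := by

  constructor
  · intro hfree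
    exact fixed_finite hp ρ hfree
  · intro hfin
    by_contra hnf
    push_neg at hnf
    obtain ⟨g, hg, v, hv, hv0⟩ := hnf
    exact fixed_infinite hp ρ g hg v hv0 hv hfin
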